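/- Let A, B, C be polarized uniform groupoids, S ∈ U_{A⊸B} and T ∈ U_{B⊸C}, and suppose the composition T ⊙ S is thin as a prestrategy on A ⊸ C, i.e. every morphism (φ, ψ) of the pullback groupoid T ⊙ S such that ∂S_A(φ) ∈ A₋ and ∂T_C(ψ) ∈ C₊ is an identity. Then every reindexing problem — a triple of an object s of S, an object t of T, and a morphism θ : ∂S_B(s) → ∂T_B(t) of B — has at most one positive solution, where a solution is a pair of morphisms φ : s → s' in S and ψ : t' → t in T with ∂S_B(s') = ∂T_B(t') and ∂T_B(ψ) ∘ ∂S_B(φ) = θ, and a solution is positive when ∂S_A(φ) ∈ A₋ and ∂T_C(ψ) ∈ C₊. -/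
import Mathlib


open CategoryTheory

universe u

namespace ThinSpan

variable {S T B : Type u} [Groupoid.{u} S] [Groupoid.{u} T] [Groupoid.{u} B]

/-- The (strict) pullback groupoid of a cospan of groupoids: objects are pairs
`(s, t)` with `f.obj s = g.obj t`. -/
structure PB (f : S ⥤ B) (g : T ⥤ B) : Type u where
  s : S
  t : T
  eq : f.obj s = g.obj t

namespace PB

variable {f : S ⥤ B} {g : T ⥤ B}

/-- Morphisms of the pullback groupoid: pairs `(φ, ψ)` with `f.map φ = g.map ψ`
(modulo the identifications of the endpoints). -/
@[ext]
structure Hom (x y : PB f g) : Type u where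
  l : x.s ⟶ y.s
  r : x.t ⟶ y.t
  comm : f.map l ≫ eqToHom y.eq = eqToHom x.eq ≫ g.map r

instance category : Category.{u} (PB f g) where
  Hom := Hom
  id x := ⟨𝟙 x.s, 𝟙 x.t, by simp⟩
  comp u v := ⟨u.l ≫ v.l, u.r ≫ v.r, by
    rw [Functor.map_comp, Functor.map_comp, Category.assoc, v.comm, ← Category.assoc,
      u.comm, Category.assoc]⟩
  id_comp u := by apply Hom.ext <;> simp
  comp_id u := by apply Hom.ext <;> simp
  assoc u v w := by apply Hom.ext <;> simp

@[simp] theorem id_l (x : PB f g) : (𝟙 x : Hom x x).l = 𝟙 x.s := rfl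
@[simp] theorem id_r (x : PB f g) : (𝟙 x : Hom x x).r = 𝟙 x.t := rfl
@[simp] theorem comp_l {x y z : PB f g} (u : x ⟶ y) (v : y ⟶ z) :
    (u ≫ v : Hom x z).l = u.l ≫ v.l := rfl
@[simp] theorem comp_r {x y z : PB f g} (u : x ⟶ y) (v : y ⟶ z) :
    (u ≫ v : Hom x z).r = u.r ≫ v.r := rfl

instance groupoid : Groupoid.{u} (PB f g) where
  inv u := ⟨Groupoid.inv u.l, Groupoid.inv u.r, by
    rw [Groupoid.inv_eq_inv, Groupoid.inv_eq_inv, Functor.map_inv, Functor.map_inv,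
      IsIso.inv_comp_eq, ← Category.assoc, IsIso.eq_comp_inv]
    exact u.comm.symm⟩
  inv_comp u := by apply Hom.ext <;> simp [Groupoid.inv_eq_inv]
  comp_inv u := by apply Hom.ext <;> simp [Groupoid.inv_eq_inv]

/-- First projection of the pullback groupoid. -/
def pl (f : S ⥤ B) (g : T ⥤ B) : PB f g ⥤ S where
  obj x := x.s
  map u := u.l

/-- Second projection of the pullback groupoid. -/
def pr (f : S ⥤ B) (g : T ⥤ B) : PB f g ⥤ T where
  obj x := x.t
  map u := u.r

end PB

/-- The bipullback condition for a cospan of groupoids: every "reindexing problem"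
`θ : f s ⟶ g t` has a solution. -/
def BipullbackCond (f : S ⥤ B) (g : T ⥤ B) : Prop :=
  ∀ (s : S) (t : T) (θ : f.obj s ⟶ g.obj t),
    ∃ (s' : S) (t' : T) (φ : s ⟶ s') (ψ : t' ⟶ t) (e : f.obj s' = g.obj t'),
      θ = f.map φ ≫ eqToHom e ≫ g.map ψ



/-- A prestrategy on a groupoid `A`: a groupoid together with a display functor to `A`. -/
structure Prestrat (A : Type u) [Groupoid.{u} A] : Type (u + 1) where
  C : Type u
  [grpd : Groupoid.{u} C]
  disp : C ⥤ A

attribute [instance] Prestrat.grpd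

variable {A B C : Type u} [Groupoid.{u} A] [Groupoid.{u} B] [Groupoid.{u} C]

/-- Uniform orthogonality of prestrategies: the pullback of the display maps is a
bipullback. -/
def Perp (σ τ : Prestrat A) : Prop :=
  BipullbackCond σ.disp τ.disp

/-- The uniform orthogonal of a set of prestrategies. -/
def perpSet (Ss : Set (Prestrat A)) : Set (Prestrat A) :=
  {τ | ∀ σ ∈ Ss, Perp σ τ}

/-- The identity prestrategy `(A, id_A)` on `A`. -/
def idPre (A : Type u) [Groupoid.{u} A] : Prestrat A :=
  ⟨A, 𝟭 A⟩

/-- The identity span on `A`, as a prestrategy from `A` to `A`. -/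
def idSpan (A : Type u) [Groupoid.{u} A] : Prestrat (A × A) :=
  ⟨A, Functor.prod' (𝟭 A) (𝟭 A)⟩

/-- Product of prestrategies. -/
def prodPre (σ : Prestrat A) (τ : Prestrat B) : Prestrat (A × B) :=
  ⟨σ.C × τ.C, σ.disp.prod τ.disp⟩

/-- The left display component of a prestrategy from `A` to `B`. -/
def dl (σ : Prestrat (A × B)) : σ.C ⥤ A :=
  σ.disp ⋙ CategoryTheory.Prod.fst A B

/-- The right display component of a prestrategy from `A` to `B`. -/
def dr (σ : Prestrat (A × B)) : σ.C ⥤ B :=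
  σ.disp ⋙ CategoryTheory.Prod.snd A B

/-- The set `U_{A ⊸ B}` of uniform prestrategies from `(A, UA)` to `(B, UB)`. -/
def ULin (UA : Set (Prestrat A)) (UB : Set (Prestrat B)) : Set (Prestrat (A × B)) :=
  {τ | ∀ σ ∈ UA, ∀ υ ∈ perpSet UB, Perp τ (prodPre σ υ)}

/-- The application `T @ S` of a prestrategy `T` from `A` to `B` to a prestrategy `S`
on `A`. -/
def appPre (σ : Prestrat A) (τ : Prestrat (A × B)) : Prestrat B :=
  ⟨PB σ.disp (dl τ), PB.pr σ.disp (dl τ) ⋙ dr τ⟩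

/-- The composition `T ⊙ S` of spans/prestrategies. -/
def compPre (σ : Prestrat (A × B)) (τ : Prestrat (B × C)) : Prestrat (A × C) :=
  ⟨PB (dr σ) (dl τ),
    Functor.prod' (PB.pl (dr σ) (dl τ) ⋙ dl σ) (PB.pr (dr σ) (dl τ) ⋙ dr τ)⟩

/-- A wide subgroupoid of a groupoid `A`: a class of morphisms containing identities and
closed under composition and inverses (with all objects of `A`). -/
structure WideSub (A : Type u) [Groupoid.{u} A] : Type u where
  mem : ∀ {a b : A}, (a ⟶ b) → Prop
  id_mem : ∀ a : A, mem (𝟙 a)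
  comp_mem : ∀ {a b c : A} {f : a ⟶ b} {g : b ⟶ c}, mem f → mem g → mem (f ≫ g)
  inv_mem : ∀ {a b : A} {f : a ⟶ b}, mem f → mem (Groupoid.inv f)

namespace WideSub

/-- The underlying type of objects of a wide subgroupoid (the same objects as `A`). -/
@[ext]
structure Obj {A : Type u} [Groupoid.{u} A] (W : WideSub A) : Type u where
  pt : A

variable {A : Type u} [Groupoid.{u} A] (W : WideSub A)

instance : Groupoid.{u} W.Obj where
  Hom x y := {f : x.pt ⟶ y.pt // W.mem f}
  id x := ⟨𝟙 x.pt, W.id_mem x.pt⟩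
  comp u v := ⟨u.1 ≫ v.1, W.comp_mem u.2 v.2⟩
  id_comp u := Subtype.ext (Category.id_comp u.1)
  comp_id u := Subtype.ext (Category.comp_id u.1)
  assoc u v w := Subtype.ext (Category.assoc u.1 v.1 w.1)
  inv u := ⟨Groupoid.inv u.1, W.inv_mem u.2⟩
  inv_comp u := Subtype.ext (Groupoid.inv_comp u.1)
  comp_inv u := Subtype.ext (Groupoid.comp_inv u.1)

/-- The inclusion functor of a wide subgroupoid. -/
def incl : W.Obj ⥤ A where
  obj x := x.pt
  map u := u.1

/-- The inclusion of a wide subgroupoid, seen as a prestrategy on `A`. -/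
def pre : Prestrat A :=
  ⟨W.Obj, W.incl⟩

end WideSub

/-- A groupoid is discrete when all of its morphisms are identities. -/
def IsDiscreteGpd (P : Type u) [Groupoid.{u} P] : Prop :=
  ∀ {x y : P} (u : x ⟶ y), ∃ h : x = y, u = CategoryTheory.eqToHom h

/-- Thin orthogonality: uniform orthogonality together with discreteness of the
pullback groupoid. -/
def TPerp (σ τ : Prestrat A) : Prop :=
  Perp σ τ ∧ IsDiscreteGpd (PB σ.disp τ.disp)

/-- The thin orthogonal of a class `Ss` of prestrategies, relative to the ambient
uniform structure `U` (so that the result is a subset of `U ⊥`). -/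
def tperpSet (U : Set (Prestrat A)) (Ss : Set (Prestrat A)) : Set (Prestrat A) :=
  {τ | τ ∈ perpSet U ∧ ∀ σ ∈ Ss, TPerp σ τ}

/-- The set `T_{A ⊸ B}` of thin prestrategies (strategies) from a thin groupoid
`(A, A₋, A₊, U_A, T_A)` to `(B, B₋, B₊, U_B, T_B)`. -/
def TLin (UA TA : Set (Prestrat A)) (UB TB : Set (Prestrat B)) :
    Set (Prestrat (A × B)) :=
  {τ | τ ∈ ULin UA UB ∧ ∀ σ ∈ TA, ∀ υ ∈ tperpSet UB TB, TPerp τ (prodPre σ υ)}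

end ThinSpan
namespace ThinSpan

theorem eqToHom_l' {S T B : Type u} [Groupoid.{u} S] [Groupoid.{u} T] [Groupoid.{u} B]
    {f : S ⥤ B} {g : T ⥤ B} {x y : PB f g} (h : x = y) :
    (eqToHom h : x ⟶ y).l = eqToHom (congrArg PB.s h) := by cases h; rfl

theorem eqToHom_r' {S T B : Type u} [Groupoid.{u} S] [Groupoid.{u} T] [Groupoid.{u} B]
    {f : S ⥤ B} {g : T ⥤ B} {x y : PB f g} (h : x = y) :
    (eqToHom h : x ⟶ y).r = eqToHom (congrArg PB.t h) := by cases h; rfl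

/-- If the composition of two uniform prestrategies is thin, then every reindexing
problem has at most one positive solution. -/
theorem unique_positive_reindexing
    {A B C : Type u} [Groupoid.{u} A] [Groupoid.{u} B] [Groupoid.{u} C]
    (Aneg Apos : WideSub A) (Bneg Bpos : WideSub B) (Cneg Cpos : WideSub C)
    (UA : Set (Prestrat A)) (UB : Set (Prestrat B)) (UC : Set (Prestrat C))
    (hUA : perpSet (perpSet UA) = UA) (hUB : perpSet (perpSet UB) = UB)
    (hUC : perpSet (perpSet UC) = UC)
    (σ : Prestrat (A × B)) (τ : Prestrat (B × C))
    (hσ : σ ∈ ULin UA UB) (hτ : τ ∈ ULin UB UC)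
    -- `τ ⊙ σ` is thin as a prestrategy on `A ⊸ C`:
    (hthin : ∀ (x y : PB (dr σ) (dl τ)) (u : x ⟶ y),
      Aneg.mem ((dl σ).map ((PB.pl (dr σ) (dl τ)).map u)) →
      Cpos.mem ((dr τ).map ((PB.pr (dr σ) (dl τ)).map u)) →
      ∃ h : x = y, u = eqToHom h) :
    ∀ (s : σ.C) (t : τ.C) (θ : (dr σ).obj s ⟶ (dl τ).obj t)
      (s'₁ : σ.C) (t'₁ : τ.C) (φ₁ : s ⟶ s'₁) (ψ₁ : t'₁ ⟶ t)
      (e₁ : (dr σ).obj s'₁ = (dl τ).obj t'₁),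
      θ = (dr σ).map φ₁ ≫ eqToHom e₁ ≫ (dl τ).map ψ₁ →
      Aneg.mem ((dl σ).map φ₁) → Cpos.mem ((dr τ).map ψ₁) →
      ∀ (s'₂ : σ.C) (t'₂ : τ.C) (φ₂ : s ⟶ s'₂) (ψ₂ : t'₂ ⟶ t)
        (e₂ : (dr σ).obj s'₂ = (dl τ).obj t'₂),
        θ = (dr σ).map φ₂ ≫ eqToHom e₂ ≫ (dl τ).map ψ₂ →
        Aneg.mem ((dl σ).map φ₂) → Cpos.mem ((dr τ).map ψ₂) →
        s'₁ = s'₂ ∧ t'₁ = t'₂ ∧ HEq φ₁ φ₂ ∧ HEq ψ₁ ψ₂ := by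
  intro s t θ s'₁ t'₁ φ₁ ψ₁ e₁ hθ₁ ha₁ hc₁ s'₂ t'₂ φ₂ ψ₂ e₂ hθ₂ ha₂ hc₂
  have comm : (dr σ).map (Groupoid.inv φ₁ ≫ φ₂) ≫ eqToHom e₂ =
      eqToHom e₁ ≫ (dl τ).map (ψ₁ ≫ Groupoid.inv ψ₂) := by
    have h := hθ₁.symm.trans hθ₂
    simp only [Functor.map_comp, Groupoid.inv_eq_inv, Functor.map_inv, Category.assoc,
      IsIso.inv_comp_eq, IsIso.eq_comp_inv]
    have h2 := congrArg (fun k => k ≫ CategoryTheory.inv ((dl τ).map ψ₂)) h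
    simp only [Category.assoc, IsIso.hom_inv_id, Category.comp_id] at h2
    exact h2.symm
  set x₁ : PB (dr σ) (dl τ) := ⟨s'₁, t'₁, e₁⟩ with hx₁
  set x₂ : PB (dr σ) (dl τ) := ⟨s'₂, t'₂, e₂⟩ with hx₂
  let u : x₁ ⟶ x₂ := ⟨Groupoid.inv φ₁ ≫ φ₂, ψ₁ ≫ Groupoid.inv ψ₂, comm⟩
  have hA : Aneg.mem ((dl σ).map (Groupoid.inv φ₁ ≫ φ₂)) := by
    rw [Functor.map_comp]
    refine Aneg.comp_mem ?_ ha₂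
    have : (dl σ).map (Groupoid.inv φ₁) = Groupoid.inv ((dl σ).map φ₁) := by
      simp [Groupoid.inv_eq_inv]
    rw [this]; exact Aneg.inv_mem ha₁
  have hC : Cpos.mem ((dr τ).map (ψ₁ ≫ Groupoid.inv ψ₂)) := by
    rw [Functor.map_comp]
    refine Cpos.comp_mem hc₁ ?_
    have : (dr τ).map (Groupoid.inv ψ₂) = Groupoid.inv ((dr τ).map ψ₂) := by
      simp [Groupoid.inv_eq_inv]
    rw [this]; exact Cpos.inv_mem hc₂
  obtain ⟨h, hu⟩ := hthin x₁ x₂ u hA hC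
  have hs : s'₁ = s'₂ := congrArg PB.s h
  have ht : t'₁ = t'₂ := congrArg PB.t h
  subst hs; subst ht
  have hl : Groupoid.inv φ₁ ≫ φ₂ = 𝟙 s'₁ := by
    have := congrArg PB.Hom.l hu
    simpa [u, eqToHom_l'] using this
  have hr : ψ₁ ≫ Groupoid.inv ψ₂ = 𝟙 t'₁ := by
    have := congrArg PB.Hom.r hu
    simpa [u, eqToHom_r'] using this
  have hφ : φ₂ = φ₁ := by
    rw [← Category.comp_id φ₁, ← hl, ← Category.assoc, Groupoid.comp_inv, Category.id_comp]
  have hψ : ψ₁ = ψ₂ := by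
    rw [← Category.id_comp ψ₂, ← hr, Category.assoc, Groupoid.inv_comp, Category.comp_id]
  exact ⟨rfl, rfl, heq_of_eq hφ.symm, heq_of_eq hψ⟩

end ThinSpan
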